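/- Every function f: ℕ^k → ℝ on multisets drawn from a finite ground set {1,...,k} (represented by their count vectors) can be written as f(S) = ρ(Σ_{s∈S} φ(s)) for some φ: {1,...,k} → ℝ and ρ: ℝ → ℝ, provided multiset sizes are bounded by N: one may take φ(i) = (N+1)^{i−1}, so that the sum Σ_{s∈S} φ(s) is injective on multisets of size ≤ N, and then define ρ on the image to recover f. -/

import Mathlib

lemma enc_inj (N : ℕ) : ∀ (k : ℕ) (c d : Fin k → ℕ),
    (∀ i, c i ≤ N) → (∀ i, d i ≤ N) →
    (∑ i, c i * (N + 1) ^ (i : ℕ)) = (∑ i, d i * (N + 1) ^ (i : ℕ)) → c = d := by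
  intro k
  induction k with
  | zero => intro c d _ _ _; funext i; exact absurd i.2 (by omega)
  | succ n ih =>
    intro c d hc hd h
    rw [Fin.sum_univ_succ, Fin.sum_univ_succ] at h
    simp only [Fin.val_zero, pow_zero, mul_one, Fin.val_succ, pow_succ'] at h
    have h' : c 0 + (N + 1) * (∑ i : Fin n, c i.succ * (N + 1) ^ (i : ℕ))
        = d 0 + (N + 1) * (∑ i : Fin n, d i.succ * (N + 1) ^ (i : ℕ)) := by
      rw [Finset.mul_sum, Finset.mul_sum]
      simpa [mul_left_comm] using h
    have h0 : c 0 = d 0 := by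
      have hm := congrArg (· % (N + 1)) h'
      simp only [Nat.add_mul_mod_self_left] at hm
      rwa [Nat.mod_eq_of_lt (by have := hc 0; omega),
        Nat.mod_eq_of_lt (by have := hd 0; omega)] at hm
    have htail : (∑ i : Fin n, c i.succ * (N + 1) ^ (i : ℕ))
        = (∑ i : Fin n, d i.succ * (N + 1) ^ (i : ℕ)) := by
      have hNE : 0 < N + 1 := by omega
      rw [h0] at h'
      exact Nat.eq_of_mul_eq_mul_left hNE (by omega)
    have := ih (fun i => c i.succ) (fun i => d i.succ)
      (fun i => hc i.succ) (fun i => hd i.succ) htail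
    funext i
    refine Fin.cases h0 (fun j => congrFun this j) i

/-- Every function on multisets over `{1,…,k}` (given by count vectors) of
size at most `N` can be written as `ρ(∑_{s∈S} φ(s))` with
`φ(i) = (N+1)^(i-1)` (zero-indexed: `(N+1)^i`). -/
theorem stmt_11 (k N : ℕ) (f : (Fin k → ℕ) → ℝ) :
    ∃ (ρ : ℝ → ℝ) (φ : Fin k → ℝ),
      (∀ i : Fin k, φ i = ((N + 1 : ℕ) : ℝ) ^ (i : ℕ)) ∧
      ∀ c : Fin k → ℕ, (∑ i, c i) ≤ N →
        f c = ρ (∑ i, (c i : ℝ) * φ i) := by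
  classical
  set E : (Fin k → ℕ) → ℝ := fun c => ∑ i, (c i : ℝ) * ((N + 1 : ℕ) : ℝ) ^ (i : ℕ) with hE
  refine ⟨fun x => if h : ∃ c, (∑ i, c i) ≤ N ∧ E c = x then f h.choose else 0,
    fun i => ((N + 1 : ℕ) : ℝ) ^ (i : ℕ), fun i => rfl, fun c hc => ?_⟩
  have hex : ∃ c', (∑ i, c' i) ≤ N ∧ E c' = E c := ⟨c, hc, rfl⟩
  show f c = (if h : ∃ c', (∑ i, c' i) ≤ N ∧ E c' = E c then f h.choose else 0)
  rw [dif_pos hex]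
  obtain ⟨hs, he⟩ := hex.choose_spec
  have hbound : ∀ (c : Fin k → ℕ), (∑ i, c i) ≤ N → ∀ i, c i ≤ N := by
    intro c hc i
    exact le_trans (Finset.single_le_sum (f := c) (fun _ _ => Nat.zero_le _)
      (Finset.mem_univ i)) hc
  have hcast : ∀ (c : Fin k → ℕ), E c = ((∑ i, c i * (N + 1) ^ (i : ℕ) : ℕ) : ℝ) := by
    intro c; simp [hE]
  have heq : hex.choose = c := by
    apply enc_inj N k _ _ (hbound _ hs) (hbound _ hc)
    have h2 : ((∑ i, hex.choose i * (N + 1) ^ (i : ℕ) : ℕ) : ℝ)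
        = ((∑ i, c i * (N + 1) ^ (i : ℕ) : ℕ) : ℝ) := by
      rw [← hcast, ← hcast]; exact he
    exact_mod_cast h2
  exact (congrArg f heq).symm
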